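/- arXiv:2307.09298 — 8 statements merged into one kernel-verified Lean document; each statement's English description precedes it below -/
import Mathlib

section
/- Over a finite field F of size Q, the polynomials x0^2 - x0, x1^Q - x1, x2^Q - x2, (x0-1)(x1^2-x1), and (x0-1)(x1-1)(x2-1) generate the vanishing ideal of the set P^2 ⊂ F^3 of standard representatives of the projective plane over F, where P^2 = {(1,a,b) : a,b ∈ F} ∪ {(0,1,b) : b ∈ F} ∪ {(0,0,1)}. -/
open MvPolynomial

set_option linter.unusedSectionVars false

variable {F : Type} [Field F] [Fintype F]

lemma sub_aeval_update_mem {σ : Type} [DecidableEq σ] (i : σ) (c : F)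
    (f : MvPolynomial σ F) :
    f - aeval (Function.update X i (C c)) f ∈ Ideal.span {X i - C c} := by
  induction f using MvPolynomial.induction_on with
  | C a => simp [aeval_C]
  | add p q hp hq =>
    have h := Ideal.add_mem _ hp hq
    have e : p + q - aeval (Function.update X i (C c)) (p + q)
        = (p - aeval (Function.update X i (C c)) p)
          + (q - aeval (Function.update X i (C c)) q) := by
      rw [map_add]; ring
    rw [e]; exact h
  | mul_X p j hp =>
    rw [map_mul, aeval_X]
    rcases eq_or_ne j i with rfl | hj
    · rw [Function.update_self]
      have e : p * X j - aeval (Function.update X j (C c)) p * C c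
          = p * (X j - C c) + (p - aeval (Function.update X j (C c)) p) * C c := by ring
      rw [e]
      exact Ideal.add_mem _ (Ideal.mul_mem_left _ _ (Ideal.subset_span rfl))
        (Ideal.mul_mem_right _ _ hp)
    · rw [Function.update_of_ne hj]
      have e : p * X j - aeval (Function.update X i (C c)) p * X j
          = (p - aeval (Function.update X i (C c)) p) * X j := by ring
      rw [e]
      exact Ideal.mul_mem_right _ _ hp

lemma eval_aeval_update {σ : Type} [DecidableEq σ] (i : σ) (c : F) (v : σ → F)
    (f : MvPolynomial σ F) :
    eval v (aeval (Function.update X i (C c)) f) = eval (Function.update v i c) f := by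
  induction f using MvPolynomial.induction_on with
  | C a => simp [aeval_C]
  | add p q hp hq => simp only [map_add, hp, hq]
  | mul_X p j hp =>
    rw [map_mul, aeval_X, map_mul, hp, map_mul, eval_X]
    congr 1
    rcases eq_or_ne j i with rfl | hj
    · simp
    · simp [Function.update_of_ne hj]

lemma mem_span_pow_card {σ : Type} [Fintype σ] [DecidableEq σ]
    (f : MvPolynomial σ F) (h : ∀ v : σ → F, eval v f = 0) :
    f ∈ Ideal.span (Set.range fun i : σ => (X i : MvPolynomial σ F) ^ Fintype.card F - X i) := by
  classical
  set q := Fintype.card F with hq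
  set I : Ideal (MvPolynomial σ F) :=
    Ideal.span (Set.range fun i : σ => (X i : MvPolynomial σ F) ^ q - X i) with hI
  have hq2 : 2 ≤ q := Fintype.one_lt_card
  have hdle : ∀ (d : σ →₀ ℕ) (i : σ), d i ≤ d.sum fun _ n => n := by
    intro d i
    by_cases hi : i ∈ d.support
    · rw [Finsupp.sum]
      exact Finset.single_le_sum (fun j _ => Nat.zero_le _) hi
    · simp [Finsupp.notMem_support_iff.mp hi]
  have hmono_mem : ∀ (d : σ →₀ ℕ) (c : F), (∀ i, d i ≤ q - 1) →
      (monomial d c : MvPolynomial σ F) ∈ restrictDegree σ F (q - 1) := by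
    intro d c hall
    rw [mem_restrictDegree]
    intro s hs i
    by_cases hc : c = 0
    · simp [support_monomial, hc] at hs
    · rw [support_monomial, if_neg hc, Finset.mem_singleton] at hs
      subst hs; exact hall i
  have mono : ∀ N (d : σ →₀ ℕ) (c : F), (d.sum fun _ n => n) ≤ N →
      ∃ g ∈ restrictDegree σ F (q - 1), (monomial d c : MvPolynomial σ F) - g ∈ I := by
    intro N
    induction N with
    | zero =>
      intro d c hd
      refine ⟨monomial d c, hmono_mem d c fun i => ?_, by simp⟩
      have := hdle d i
      omega
    | succ N ih =>
      intro d c hd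
      by_cases hall : ∀ i, d i ≤ q - 1
      · exact ⟨monomial d c, hmono_mem d c hall, by simp⟩
      · push_neg at hall
        obtain ⟨i, hi⟩ := hall
        have hiq : q ≤ d i := by omega
        have hle : Finsupp.single i q ≤ d := by rwa [Finsupp.single_le_iff]
        set e := d - Finsupp.single i q with he
        have hed : e + Finsupp.single i q = d := tsub_add_cancel_of_le hle
        set d' := e + Finsupp.single i 1 with hd'
        have h1 : (monomial e c : MvPolynomial σ F) * X i ^ q = monomial d c := by
          rw [X_pow_eq_monomial, monomial_mul, mul_one, hed]
        have h2 : (monomial e c : MvPolynomial σ F) * X i = monomial d' c := by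
          rw [← pow_one (X i : MvPolynomial σ F), X_pow_eq_monomial, monomial_mul, mul_one, hd']
        have key : (monomial d c : MvPolynomial σ F) - monomial d' c
            = monomial e c * (X i ^ q - X i) := by rw [mul_sub, h1, h2]
        have hdsum : d.sum (fun _ n => n) = e.sum (fun _ n => n) + q := by
          rw [← hed, Finsupp.sum_add_index' (fun _ => rfl) (fun _ _ _ => rfl),
            Finsupp.sum_single_index rfl]
        have hsum' : d'.sum (fun _ n => n) ≤ N := by
          rw [hd', Finsupp.sum_add_index' (fun _ => rfl) (fun _ _ _ => rfl),
            Finsupp.sum_single_index rfl]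
          omega
        obtain ⟨g, hg, hgI⟩ := ih d' c hsum'
        refine ⟨g, hg, ?_⟩
        have hmem : (monomial e c : MvPolynomial σ F) * (X i ^ q - X i) ∈ I :=
          Ideal.mul_mem_left _ _ (Ideal.subset_span ⟨i, rfl⟩)
        have hsum2 := Ideal.add_mem _ hmem hgI
        have e2 : (monomial e c : MvPolynomial σ F) * (X i ^ q - X i)
            + ((monomial d' c : MvPolynomial σ F) - g)
            = monomial d c - g := by rw [← key]; ring
        rwa [e2] at hsum2
  have red : ∀ f0 : MvPolynomial σ F, ∃ g ∈ restrictDegree σ F (q - 1), f0 - g ∈ I := by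
    intro f0
    induction f0 using MvPolynomial.induction_on' with
    | monomial d c => exact mono _ d c le_rfl
    | add p r hp hr =>
      obtain ⟨g1, hg1, hp1⟩ := hp
      obtain ⟨g2, hg2, hp2⟩ := hr
      refine ⟨g1 + g2, Submodule.add_mem _ hg1 hg2, ?_⟩
      have hsum := Ideal.add_mem _ hp1 hp2
      have e2 : p + r - (g1 + g2) = (p - g1) + (r - g2) := by ring
      rwa [e2]
  obtain ⟨g, hg, hfg⟩ := red f
  have hIzero : ∀ p ∈ I, ∀ v : σ → F, eval v p = 0 := by
    intro p hp v
    have hle : I ≤ RingHom.ker (eval v) := by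
      rw [hI]
      refine Ideal.span_le.2 ?_
      rintro _ ⟨i, rfl⟩
      simp [RingHom.mem_ker, hq, FiniteField.pow_card]
    exact hle hp
  have hgzero : ∀ v : σ → F, eval v g = 0 := by
    intro v
    have h1 := hIzero _ hfg v
    rw [map_sub, h v, zero_sub, neg_eq_zero] at h1
    exact h1
  have hg0 : g = 0 := MvPolynomial.eq_zero_of_eval_eq_zero σ F g hgzero hg
  rw [hg0, sub_zero] at hfg
  exact hfg


/-- the listed polynomials generate the vanishing ideal of the set P² of
standard representatives of the projective plane over a finite field F of size Q. -/
theorem stmt_2 (F : Type) [Field F] [Fintype F] (Q : ℕ) (hQ : Q = Fintype.card F)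
    (P2 : Set (Fin 3 → F))
    (hP2 : P2 = {v | v 0 = 1} ∪ {v | v 0 = 0 ∧ v 1 = 1} ∪
        {v | v 0 = 0 ∧ v 1 = 0 ∧ v 2 = 1})
    (f : MvPolynomial (Fin 3) F) :
    f ∈ Ideal.span ({X 0 ^ 2 - X 0, X 1 ^ Q - X 1, X 2 ^ Q - X 2,
        (X 0 - 1) * (X 1 ^ 2 - X 1), (X 0 - 1) * (X 1 - 1) * (X 2 - 1)} :
          Set (MvPolynomial (Fin 3) F)) ↔
      ∀ v ∈ P2, eval v f = 0 := by
  subst hQ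
  subst hP2
  constructor
  · intro hf v hv
    have hle : Ideal.span ({X 0 ^ 2 - X 0, X 1 ^ Fintype.card F - X 1,
        X 2 ^ Fintype.card F - X 2, (X 0 - 1) * (X 1 ^ 2 - X 1),
        (X 0 - 1) * (X 1 - 1) * (X 2 - 1)} : Set (MvPolynomial (Fin 3) F))
        ≤ RingHom.ker (eval v) := by
      refine Ideal.span_le.2 ?_
      intro p hp
      simp only [Set.mem_insert_iff, Set.mem_singleton_iff] at hp
      rcases hv with (hv | hv) | hv
      · have h0 : v 0 = 1 := hv
        rcases hp with rfl | rfl | rfl | rfl | rfl <;>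
          simp [RingHom.mem_ker, h0, FiniteField.pow_card]
      · obtain ⟨h0, h1⟩ := hv
        rcases hp with rfl | rfl | rfl | rfl | rfl <;>
          simp [RingHom.mem_ker, h0, h1, FiniteField.pow_card]
      · obtain ⟨h0, h1, h2⟩ := hv
        rcases hp with rfl | rfl | rfl | rfl | rfl <;>
          simp [RingHom.mem_ker, h0, h1, h2, FiniteField.pow_card]
    exact hle hf
  · intro h
    set I := Ideal.span ({X 0 ^ 2 - X 0, X 1 ^ Fintype.card F - X 1,
        X 2 ^ Fintype.card F - X 2, (X 0 - 1) * (X 1 ^ 2 - X 1),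
        (X 0 - 1) * (X 1 - 1) * (X 2 - 1)} : Set (MvPolynomial (Fin 3) F)) with hIdef
    have hg1 : (X 0 ^ 2 - X 0 : MvPolynomial (Fin 3) F) ∈ I := Ideal.subset_span (by simp)
    have hg2 : (X 1 ^ Fintype.card F - X 1 : MvPolynomial (Fin 3) F) ∈ I :=
      Ideal.subset_span (by simp)
    have hg3 : (X 2 ^ Fintype.card F - X 2 : MvPolynomial (Fin 3) F) ∈ I :=
      Ideal.subset_span (by simp)
    have hg4 : ((X 0 - 1) * (X 1 ^ 2 - X 1) : MvPolynomial (Fin 3) F) ∈ I :=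
      Ideal.subset_span (by simp)
    have hg5 : ((X 0 - 1) * (X 1 - 1) * (X 2 - 1) : MvPolynomial (Fin 3) F) ∈ I :=
      Ideal.subset_span (by simp)
    have hpow : ∀ k : ℕ, (X 0 ^ (k + 1) - X 0 : MvPolynomial (Fin 3) F) ∈ I := by
      intro k
      induction k with
      | zero => simpa using I.zero_mem
      | succ k ih =>
        have e : (X 0 ^ (k + 2) - X 0 : MvPolynomial (Fin 3) F)
            = X 0 ^ k * (X 0 ^ 2 - X 0) + (X 0 ^ (k + 1) - X 0) := by ring
        rw [e]
        exact Ideal.add_mem _ (Ideal.mul_mem_left _ _ hg1) ih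
    have hX0q : (X 0 ^ Fintype.card F - X 0 : MvPolynomial (Fin 3) F) ∈ I := by
      obtain ⟨k, hk⟩ : ∃ k, Fintype.card F = k + 1 :=
        ⟨Fintype.card F - 1, by have := Fintype.one_lt_card (α := F); omega⟩
      rw [hk]; exact hpow k
    have hspan : Ideal.span (Set.range fun i : Fin 3 =>
        (X i : MvPolynomial (Fin 3) F) ^ Fintype.card F - X i) ≤ I := by
      refine Ideal.span_le.2 ?_
      rintro _ ⟨i, rfl⟩
      fin_cases i
      · exact hX0q
      · exact hg2
      · exact hg3
    -- Piece A
    set gA := aeval (Function.update (X : Fin 3 → MvPolynomial (Fin 3) F) 0 (C 1)) f with hgA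
    have hAmem : gA ∈ I := by
      refine hspan (mem_span_pow_card gA ?_)
      intro v
      rw [hgA, eval_aeval_update]
      apply h
      refine Set.mem_union_left _ (Set.mem_union_left _ ?_)
      simp [Function.update]
    obtain ⟨a, ha⟩ := Ideal.mem_span_singleton'.1 (sub_aeval_update_mem 0 (1 : F) f)
    have hfA : f = gA + a * (X 0 - C 1) := by rw [ha]; ring
    have memA : (X 0 : MvPolynomial (Fin 3) F) * f ∈ I := by
      have e : (X 0 : MvPolynomial (Fin 3) F) * f
          = X 0 * gA + a * (X 0 ^ 2 - X 0) := by rw [hfA, C_1]; ring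
      rw [e]
      exact Ideal.add_mem _ (Ideal.mul_mem_left _ _ hAmem) (Ideal.mul_mem_left _ _ hg1)
    -- Piece B1
    set f1 := aeval (Function.update (X : Fin 3 → MvPolynomial (Fin 3) F) 1 (C 1)) f with hf1
    set gB := aeval (Function.update (X : Fin 3 → MvPolynomial (Fin 3) F) 0 (C 0)) f1 with hgB
    have hBmem : gB ∈ I := by
      refine hspan (mem_span_pow_card gB ?_)
      intro v
      rw [hgB, eval_aeval_update, hf1, eval_aeval_update]
      apply h
      refine Set.mem_union_left _ (Set.mem_union_right _ ?_)
      exact ⟨by simp [Function.update], by simp [Function.update]⟩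
    obtain ⟨b1, hb1⟩ := Ideal.mem_span_singleton'.1 (sub_aeval_update_mem 1 (1 : F) f)
    obtain ⟨b0, hb0⟩ := Ideal.mem_span_singleton'.1 (sub_aeval_update_mem 0 (0 : F) f1)
    have hfB : f = gB + b0 * X 0 + b1 * (X 1 - 1) := by
      have e1 : f = f1 + b1 * (X 1 - C 1) := by rw [hb1]; ring
      have e2 : f1 = gB + b0 * (X 0 - C 0) := by rw [hb0]; ring
      rw [e1, e2, C_1, C_0]; ring
    have memB1 : (1 - X 0 : MvPolynomial (Fin 3) F) * (X 1 * f) ∈ I := by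
      have e : (1 - X 0 : MvPolynomial (Fin 3) F) * (X 1 * f)
          = (1 - X 0) * (X 1 * gB) + (-(b0 * X 1)) * (X 0 ^ 2 - X 0)
            + (-b1) * ((X 0 - 1) * (X 1 ^ 2 - X 1)) := by rw [hfB]; ring
      rw [e]
      exact Ideal.add_mem _ (Ideal.add_mem _
        (Ideal.mul_mem_left _ _ (Ideal.mul_mem_left _ _ hBmem))
        (Ideal.mul_mem_left _ _ hg1)) (Ideal.mul_mem_left _ _ hg4)
    -- Piece B2
    set f2 := aeval (Function.update (X : Fin 3 → MvPolynomial (Fin 3) F) 2 (C 1)) f with hf2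
    set f3 := aeval (Function.update (X : Fin 3 → MvPolynomial (Fin 3) F) 1 (C 0)) f2 with hf3
    set gC := aeval (Function.update (X : Fin 3 → MvPolynomial (Fin 3) F) 0 (C 0)) f3 with hgC
    have hCmem : gC ∈ I := by
      refine hspan (mem_span_pow_card gC ?_)
      intro v
      rw [hgC, eval_aeval_update, hf3, eval_aeval_update, hf2, eval_aeval_update]
      apply h
      refine Set.mem_union_right _ ?_
      exact ⟨by simp [Function.update], by simp [Function.update], by simp [Function.update]⟩
    obtain ⟨c2, hc2⟩ := Ideal.mem_span_singleton'.1 (sub_aeval_update_mem 2 (1 : F) f)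
    obtain ⟨c1, hc1⟩ := Ideal.mem_span_singleton'.1 (sub_aeval_update_mem 1 (0 : F) f2)
    obtain ⟨c0, hc0⟩ := Ideal.mem_span_singleton'.1 (sub_aeval_update_mem 0 (0 : F) f3)
    have hfC : f = gC + c0 * X 0 + c1 * X 1 + c2 * (X 2 - 1) := by
      have e1 : f = f2 + c2 * (X 2 - C 1) := by rw [hc2]; ring
      have e2 : f2 = f3 + c1 * (X 1 - C 0) := by rw [hc1]; ring
      have e3 : f3 = gC + c0 * (X 0 - C 0) := by rw [hc0]; ring
      rw [e1, e2, e3, C_1, C_0]; ring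
    have memB2 : (1 - X 0 : MvPolynomial (Fin 3) F) * ((1 - X 1) * f) ∈ I := by
      have e : (1 - X 0 : MvPolynomial (Fin 3) F) * ((1 - X 1) * f)
          = (1 - X 0) * ((1 - X 1) * gC)
            + (-(c0 * (1 - X 1))) * (X 0 ^ 2 - X 0)
            + c1 * ((X 0 - 1) * (X 1 ^ 2 - X 1))
            + c2 * ((X 0 - 1) * (X 1 - 1) * (X 2 - 1)) := by rw [hfC]; ring
      rw [e]
      exact Ideal.add_mem _ (Ideal.add_mem _ (Ideal.add_mem _
        (Ideal.mul_mem_left _ _ (Ideal.mul_mem_left _ _ hCmem))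
        (Ideal.mul_mem_left _ _ hg1))
        (Ideal.mul_mem_left _ _ hg4)) (Ideal.mul_mem_left _ _ hg5)
    have final : f = X 0 * f + ((1 - X 0) * (X 1 * f) + (1 - X 0) * ((1 - X 1) * f)) := by ring
    rw [show (f ∈ Ideal.span _) = (f ∈ I) from rfl]
    rw [final]
    exact Ideal.add_mem _ memA (Ideal.add_mem _ memB1 memB2)
end

section
/- Over a finite field F of size Q, the zero set in F^{m+1} of the polynomials f_0 = x0^2 - x0, f_i = x_i^Q - x_i for 1 ≤ i ≤ m, g_k = (x0-1)(x1-1)···(x_{k-1}-1)(x_k^2 - x_k) for 1 ≤ k ≤ m-1, and g_m = (x0-1)(x1-1)···(x_m-1), is exactly the set P^m of standard representatives of projective m-space: P^m = ∪_{i=0}^m {(0,...,0,1,a_{i+1},...,a_m) : a_j ∈ F}, where the 1 is in coordinate i. -/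
lemma quad_aux {F : Type} [Field F] {x : F} (h : x ^ 2 - x = 0) : x = 0 ∨ x = 1 := by
  have h' : x * (x - 1) = 0 := by linear_combination h
  rcases mul_eq_zero.mp h' with h | h
  · exact Or.inl h
  · exact Or.inr (by linear_combination h)

/-- over a finite field F of size Q, the common zero set in F^{m+1} of
f₀ = x₀²-x₀, fᵢ = xᵢ^Q - xᵢ (1 ≤ i ≤ m), g_k = (x₀-1)⋯(x_{k-1}-1)(x_k²-x_k)
(1 ≤ k ≤ m-1), and g_m = (x₀-1)⋯(x_m-1) is exactly the set P^m of standard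
representatives of projective m-space. -/
theorem stmt_3 (F : Type) [Field F] [Fintype F] (Q m : ℕ)
    (hQ : Q = Fintype.card F) (hm : 1 ≤ m) (v : Fin (m + 1) → F) :
    ((v 0) ^ 2 - v 0 = 0 ∧
      (∀ i : Fin (m + 1), 1 ≤ (i : ℕ) → (v i) ^ Q - v i = 0) ∧
      (∀ k : Fin (m + 1), 1 ≤ (k : ℕ) → (k : ℕ) ≤ m - 1 →
        (∏ j ∈ Finset.univ.filter (fun j : Fin (m + 1) => j < k), (v j - 1)) *
          ((v k) ^ 2 - v k) = 0) ∧
      (∏ j : Fin (m + 1), (v j - 1)) = 0) ↔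
    ∃ i : Fin (m + 1), (∀ j, j < i → v j = 0) ∧ v i = 1 := by
  constructor
  · rintro ⟨h0, _hf, hg, hlast⟩
    classical
    obtain ⟨j0, -, hj0⟩ := Finset.prod_eq_zero_iff.mp hlast
    have hj0' : v j0 = 1 := by linear_combination hj0
    set S := Finset.univ.filter (fun j : Fin (m+1) => v j = 1) with hS
    have hSne : S.Nonempty := ⟨j0, by simp [hS, hj0']⟩
    set i := S.min' hSne with hi
    have hvi : v i = 1 := by
      have := S.min'_mem hSne
      simpa [hS] using this
    have hmin : ∀ j, j < i → v j ≠ 1 := by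
      intro j hj hj1
      exact absurd (S.min'_le j (by simp [hS, hj1])) (not_le.mpr hj)
    refine ⟨i, ?_, hvi⟩
    have key : ∀ n : ℕ, ∀ j : Fin (m+1), (j : ℕ) = n → j < i → v j = 0 := by
      intro n
      induction n using Nat.strong_induction_on with
      | _ n IH =>
        intro j hjn hji
        have hne : v j ≠ 1 := hmin j hji
        have hprod : (∏ l ∈ Finset.univ.filter (fun l : Fin (m+1) => l < j), (v l - 1)) ≠ 0 := by
          apply Finset.prod_ne_zero_iff.mpr
          intro l hl
          have hlj : l < j := (Finset.mem_filter.mp hl).2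
          have hln : (l : ℕ) < n := by rw [← hjn]; exact hlj
          have : v l = 0 := IH (l : ℕ) hln l rfl (hlj.trans hji)
          simp [this]
        rcases Nat.eq_zero_or_pos n with h0n | h1n
        · have hj0 : j = 0 := by apply Fin.ext; simp [hjn, h0n]
          subst hj0
          rcases quad_aux h0 with h | h
          · exact h
          · exact absurd h hne
        · have hjm : (j : ℕ) < m := by
            have h1 : (j : ℕ) < (i : ℕ) := hji
            have h2 : (i : ℕ) ≤ m := Nat.lt_succ_iff.mp i.isLt
            omega
          have := hg j (by omega) (by omega)
          rcases mul_eq_zero.mp this with h | h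
          · exact absurd h hprod
          · rcases quad_aux h with h | h
            · exact h
            · exact absurd h hne
    exact fun j hj => key (j : ℕ) j rfl hj
  · rintro ⟨i, hlt, hi⟩
    refine ⟨?_, ?_, ?_, ?_⟩
    · rcases eq_or_lt_of_le (Fin.zero_le i) with h | h
      · rw [← h] at hi; rw [hi]; ring
      · rw [hlt 0 h]; ring
    · intro j _
      rw [hQ, FiniteField.pow_card, sub_self]
    · intro k _ _
      rcases lt_trichotomy k i with h | h | h
      · rw [hlt k h]; ring
      · subst h; rw [hi]; ring
      · rw [Finset.prod_eq_zero (i := i) (by simp [h]) (by rw [hi]; ring)]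
        exact zero_mul _
    · exact Finset.prod_eq_zero (Finset.mem_univ i) (by rw [hi]; ring)
end

section
/- Let F be a finite field of size Q and let a0 ≥ 1, a1 ≥ 1, a2 ≥ 0 be integers. Then the polynomials x0^{a0}·x1^{a1}·x2^{a2} and x1^{a1}x2^{a2} + (x0-1)(x2^{a2} + x1 - 1) take the same value at every point of P^2 = {(1,a,b) : a,b ∈ F} ∪ {(0,1,b) : b ∈ F} ∪ {(0,0,1)} ⊂ F^3. -/
/-- for a₀ ≥ 1, a₁ ≥ 1, a₂ ≥ 0, the polynomials x₀^{a₀}x₁^{a₁}x₂^{a₂} and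
x₁^{a₁}x₂^{a₂} + (x₀-1)(x₂^{a₂} + x₁ - 1) take the same value at every point of P². -/
theorem stmt_7 (F : Type) [Field F] [Fintype F] (a0 a1 a2 : ℕ)
    (ha0 : 1 ≤ a0) (ha1 : 1 ≤ a1)
    (P2 : Set (Fin 3 → F))
    (hP2 : P2 = {v | v 0 = 1} ∪ {v | v 0 = 0 ∧ v 1 = 1} ∪
        {v | v 0 = 0 ∧ v 1 = 0 ∧ v 2 = 1}) :
    ∀ v ∈ P2, (v 0) ^ a0 * (v 1) ^ a1 * (v 2) ^ a2 =
      (v 1) ^ a1 * (v 2) ^ a2 + (v 0 - 1) * ((v 2) ^ a2 + v 1 - 1) := by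
  subst hP2
  rintro v ((h | ⟨h0, h1⟩) | ⟨h0, h1, h2⟩)
  · rw [h]; ring
  · simp [h0, h1, zero_pow (by omega : a0 ≠ 0), one_pow]
  · simp [h0, h1, h2, zero_pow (by omega : a0 ≠ 0), zero_pow (by omega : a1 ≠ 0), one_pow]
end

section
/- Let F be a field and a0, a1, ..., am positive integers with m ≥ 1. Define recursively r_m = x_m^{a_m} + (x_{m-1} - 1) and r_k = x_k^{a_k}·x_{k+1}^{a_{k+1}}···x_m^{a_m} + (x_{k-1} - 1)·r_{k+1} for k = m-1, ..., 1. Then the polynomial x0^{a0}·x1^{a1}···x_m^{a_m} and the polynomial r_1 take the same value at every point of P^m ⊂ F^{m+1}, the set of standard representatives of projective m-space. -/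
/-- The downward recursion of STATEMENT 8: `rDown v a m i` represents r_{m-i}, where
r_m = x_m^{a_m} + (x_{m-1} - 1) and
r_k = x_k^{a_k}⋯x_m^{a_m} + (x_{k-1} - 1)·r_{k+1}. -/
noncomputable def rDown {F : Type} [Field F] (v : ℕ → F) (a : ℕ → ℕ) (m : ℕ) : ℕ → F
  | 0 => v m ^ a m + (v (m - 1) - 1)
  | i + 1 => (∏ j ∈ Finset.Icc (m - (i + 1)) m, v j ^ a j) +
      (v (m - (i + 1) - 1) - 1) * rDown v a m i

lemma prod_Icc_bot {F : Type} [Field F] (f : ℕ → F) (i m : ℕ) (h : i ≤ m) :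
    ∏ j ∈ Finset.Icc i m, f j = f i * ∏ j ∈ Finset.Icc (i + 1) m, f j := by
  rw [Finset.Icc_eq_cons_Ioc h, Finset.prod_cons, Finset.Icc_add_one_left_eq_Ioc]

lemma rDown_zero {F : Type} [Field F] (v : ℕ → F) (a : ℕ → ℕ) (m : ℕ)
    (ha : ∀ i ≤ m, 1 ≤ a i) (i : ℕ) (hi1 : 1 ≤ i) (him : i ≤ m)
    (hz : ∀ j < i, v j = 0) (h1 : v i = 1) :
    ∀ t, t < m → m - i ≤ t → rDown v a m t = 0 := by
  intro t
  induction t with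
  | zero =>
    intro htm hmi
    have : i = m := by omega
    subst this
    simp only [rDown]
    rw [h1, one_pow, hz (i - 1) (by omega)]
    ring
  | succ t ih =>
    intro htm hmi
    set k := m - (t + 1) with hk
    have hk1 : 1 ≤ k := by omega
    have hkm : k + (t + 1) = m := by omega
    have hki : k ≤ i := by omega
    simp only [rDown, ← hk]
    rcases eq_or_lt_of_le hki with hke | hkl
    · -- k = i
      have hrt : rDown v a m t = ∏ j ∈ Finset.Icc (i + 1) m, v j ^ a j := by
        cases t with
        | zero =>
          have hmi1 : m = i + 1 := by omega
          simp only [rDown]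
          rw [hmi1]
          rw [show i + 1 - 1 = i by omega, h1]
          rw [Finset.Icc_self, Finset.prod_singleton]
          ring
        | succ s =>
          simp only [rDown]
          have h2 : m - (s + 1) = i + 1 := by omega
          have h3 : m - (s + 1) - 1 = i := by omega
          rw [h3, h2, h1]
          ring
      rw [hrt, hke, prod_Icc_bot _ i m him, h1, one_pow, one_mul,
        hz (i - 1) (by omega)]
      ring
    · -- k < i
      have hprod : ∏ j ∈ Finset.Icc k m, v j ^ a j = 0 := by
        apply Finset.prod_eq_zero (Finset.mem_Icc.mpr ⟨le_refl k, by omega⟩)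
        rw [hz k hkl, zero_pow]
        exact Nat.one_le_iff_ne_zero.mp (ha k (by omega))
      rw [hprod, ih (by omega) (by omega)]
      ring

/-- for positive exponents a₀,…,a_m, the monomial x₀^{a₀}⋯x_m^{a_m} and the
recursively defined polynomial r₁ take the same value at every standard representative
point of projective m-space. -/
theorem stmt_8 (F : Type) [Field F] (m : ℕ) (hm : 1 ≤ m) (a : ℕ → ℕ)
    (ha : ∀ i ≤ m, 1 ≤ a i) (v : ℕ → F)
    (hv : ∃ i ≤ m, (∀ j < i, v j = 0) ∧ v i = 1) :
    ∏ j ∈ Finset.range (m + 1), v j ^ a j = rDown v a m (m - 1) := by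
  obtain ⟨i, him, hz, h1⟩ := hv
  have hrange : Finset.range (m + 1) = Finset.Icc 0 m := by
    rw [Finset.range_eq_Ico, ← Finset.Ico_add_one_right_eq_Icc]
  rcases Nat.eq_zero_or_pos i with hi0 | hi1
  · -- i = 0, v 0 = 1
    subst hi0
    rw [hrange, prod_Icc_bot _ 0 m (by omega), h1, one_pow, one_mul]
    rcases Nat.lt_or_ge m 2 with hm2 | hm2
    · -- m = 1
      have : m = 1 := by omega
      subst this
      rw [show rDown v a 1 (1 - 1) = rDown v a 1 0 from rfl]; simp only [rDown]
      rw [show (1:ℕ) - 1 = 0 by rfl, h1, Finset.Icc_self, Finset.prod_singleton]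
      ring
    · -- m ≥ 2 : m - 1 = (m-2) + 1
      have hms : m - 1 = (m - 2) + 1 := by omega
      rw [hms]
      simp only [rDown]
      rw [show m - (m - 2 + 1) = 1 by omega, show (1:ℕ) - 1 = 0 by rfl, h1]
      ring
  · -- i ≥ 1 : both sides zero
    have hlhs : ∏ j ∈ Finset.range (m + 1), v j ^ a j = 0 := by
      apply Finset.prod_eq_zero (Finset.mem_range.mpr (by omega : 0 < m + 1))
      rw [hz 0 (by omega), zero_pow]
      exact Nat.one_le_iff_ne_zero.mp (ha 0 (by omega))
    rw [hlhs, rDown_zero v a m ha i hi1 him hz h1 (m - 1) (by omega) (by omega)]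
end

section
/- Let F be a finite field with Q elements, Q > 2, and let S = F[x0,x1,x2]. The set of (classes of) monomials {x1^{a1}·x2^{a2} : 0 ≤ a1,a2 ≤ Q-1} ∪ {x0·x2^{a2} : 0 ≤ a2 ≤ Q-1} ∪ {x0·x1} has cardinality Q^2 + Q + 1, which equals the cardinality of the set P^2 of standard projective representatives in F^3; moreover, the evaluation map sending a polynomial to its vector of values on P^2 restricts to an injective map on the F-linear span of this monomial set. -/
open MvPolynomial



namespace Stmt9Aux

/-- exponent vector (a,b,c) as a `Fin 3 →₀ ℕ`. -/
noncomputable def e3 (a b c : ℕ) : Fin 3 →₀ ℕ :=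
  Finsupp.single 0 a + Finsupp.single 1 b + Finsupp.single 2 c

@[simp] lemma e3_apply0 (a b c : ℕ) : e3 a b c 0 = a := by
  simp [e3, Finsupp.single_apply]

@[simp] lemma e3_apply1 (a b c : ℕ) : e3 a b c 1 = b := by
  simp [e3, Finsupp.single_apply]

@[simp] lemma e3_apply2 (a b c : ℕ) : e3 a b c 2 = c := by
  simp [e3, Finsupp.single_apply]

lemma e3_eta (d : Fin 3 →₀ ℕ) : e3 (d 0) (d 1) (d 2) = d := by
  ext i
  fin_cases i <;> simp

lemma e3_inj {a b c a' b' c' : ℕ} (h : e3 a b c = e3 a' b' c') :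
    a = a' ∧ b = b' ∧ c = c' := by
  refine ⟨?_, ?_, ?_⟩
  · have := DFunLike.congr_fun h 0; simpa using this
  · have := DFunLike.congr_fun h 1; simpa using this
  · have := DFunLike.congr_fun h 2; simpa using this

variable {F : Type} [Field F]

lemma mon1 (a b : ℕ) :
    (X 1 ^ a * X 2 ^ b : MvPolynomial (Fin 3) F) = monomial (e3 0 a b) 1 := by
  rw [X_pow_eq_monomial, X_pow_eq_monomial, monomial_mul, one_mul]
  congr 1
  simp [e3]

lemma mon2 (b : ℕ) :
    (X 0 * X 2 ^ b : MvPolynomial (Fin 3) F) = monomial (e3 1 0 b) 1 := by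
  rw [X_pow_eq_monomial, X, monomial_mul, one_mul]
  congr 1
  simp [e3, add_comm]

lemma mon3 : (X 0 * X 1 : MvPolynomial (Fin 3) F) = monomial (e3 1 1 0) 1 := by
  rw [X, X, monomial_mul, one_mul]
  congr 1
  simp [e3]

lemma key_single {α M : Type*} [DecidableEq α] [AddCommMonoid M] (s : Finset α)
    (c : α → M) (p : α → Prop) [DecidablePred p] (A : α) (hA : p A)
    (hcand : ∀ d ∈ s, p d → d = A) (h0 : A ∉ s → c A = 0) :
    (∑ d ∈ s, if p d then c d else 0) = c A := by
  have step : ∀ d ∈ s, (if p d then c d else 0) = (if d = A then c d else 0) := by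
    intro d hd
    by_cases hpd : p d
    · rw [if_pos hpd, hcand d hd hpd, if_pos rfl]
    · rw [if_neg hpd, if_neg fun h : d = A => hpd (h ▸ hA)]
  rw [Finset.sum_congr rfl step, Finset.sum_ite_eq' s A c]
  by_cases hAs : A ∈ s
  · rw [if_pos hAs]
  · rw [if_neg hAs, h0 hAs]

lemma key_two {α M : Type*} [DecidableEq α] [AddCommMonoid M] (s : Finset α)
    (c : α → M) (p : α → Prop) [DecidablePred p] (A B : α) (hAB : A ≠ B)
    (hA : p A) (hB : p B)
    (hcand : ∀ d ∈ s, p d → d = A ∨ d = B)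
    (h0A : A ∉ s → c A = 0) (h0B : B ∉ s → c B = 0) :
    (∑ d ∈ s, if p d then c d else 0) = c A + c B := by
  have step : ∀ d ∈ s,
      (if p d then c d else 0)
        = (if d = A then c d else 0) + (if d = B then c d else 0) := by
    intro d hd
    by_cases hpd : p d
    · rcases hcand d hd hpd with rfl | rfl
      · rw [if_pos rfl, if_neg hAB, add_zero, if_pos hpd]
      · rw [if_pos rfl, if_neg fun h : d = A => hAB h.symm, zero_add, if_pos hpd]
    · rw [if_neg hpd, if_neg fun h : d = A => hpd (h ▸ hA),
        if_neg fun h : d = B => hpd (h ▸ hB), add_zero]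
  rw [Finset.sum_congr rfl step, Finset.sum_add_distrib,
    Finset.sum_ite_eq' s A c, Finset.sum_ite_eq' s B c]
  by_cases hAs : A ∈ s <;> by_cases hBs : B ∈ s <;>
    simp [hAs, hBs, h0A, h0B]

end Stmt9Aux

namespace Stmt9Aux

/-- Exponent vectors allowed in the span of `B`. -/
def GoodSet (Q : ℕ) : Set (Fin 3 →₀ ℕ) :=
  {d | (d 0 = 0 ∧ d 1 ≤ Q - 1 ∧ d 2 ≤ Q - 1) ∨
      (d 0 = 1 ∧ d 1 = 0 ∧ d 2 ≤ Q - 1) ∨ (d 0 = 1 ∧ d 1 = 1 ∧ d 2 = 0)}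

lemma aux_inj {F : Type} [Field F] [Fintype F] (Q : ℕ)
    (hQ : Q = Fintype.card F) (hQ2 : 2 < Q) (f : MvPolynomial (Fin 3) F)
    (hsupp : ∀ d ∈ f.support, d ∈ GoodSet Q)
    (hv : ∀ v : Fin 3 → F,
      (v 0 = 1 ∨ v 0 = 0 ∧ v 1 = 1 ∨ (v 0 = 0 ∧ v 1 = 0 ∧ v 2 = 1)) →
      eval v f = 0) :
    f = 0 := by
  classical
  have hQ1 : 1 ≤ Q - 1 := by omega
  -- the polynomial obtained by substituting x₀ := 1
  set f₁ : MvPolynomial (Fin 3) F :=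
    ∑ d ∈ f.support, monomial (e3 0 (d 1) (d 2)) (coeff d f) with hf₁
  have heval1 : ∀ v : Fin 3 → F, eval v f₁ = 0 := by
    intro v
    have h1 : eval v f₁ = ∑ d ∈ f.support, coeff d f * (v 1 ^ d 1 * v 2 ^ d 2) := by
      rw [hf₁, map_sum]
      refine Finset.sum_congr rfl fun d _ => ?_
      rw [eval_monomial, Finsupp.prod_pow, Fin.prod_univ_three]
      simp [mul_assoc]
    have h2 : eval ![1, v 1, v 2] f
        = ∑ d ∈ f.support, coeff d f * (v 1 ^ d 1 * v 2 ^ d 2) := by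
      rw [eval_eq']
      refine Finset.sum_congr rfl fun d _ => ?_
      rw [Fin.prod_univ_three]
      simp [mul_assoc]
    rw [h1, ← h2]
    exact hv _ (Or.inl (by simp))
  have hf₁deg : f₁ ∈ restrictDegree (Fin 3) F (Fintype.card F - 1) := by
    rw [mem_restrictDegree]
    intro s hs i
    have hsub : f₁.support ⊆ f.support.biUnion
        fun d => (monomial (e3 0 (d 1) (d 2)) (coeff d f)).support := by
      rw [hf₁]; exact MvPolynomial.support_sum
    rcases Finset.mem_biUnion.mp (hsub hs) with ⟨d, hd, hsd⟩
    have hse : s = e3 0 (d 1) (d 2) := by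
      have := support_monomial_subset hsd
      simpa using this
    have hg := hsupp d hd
    rw [hse, ← hQ]
    fin_cases i
    · simp
    · show e3 0 (d 1) (d 2) 1 ≤ Q - 1
      rw [e3_apply1]
      rcases hg with ⟨_, h1, _⟩ | ⟨_, h1, _⟩ | ⟨_, h1, _⟩ <;> omega
    · show e3 0 (d 1) (d 2) 2 ≤ Q - 1
      rw [e3_apply2]
      rcases hg with ⟨_, _, h2⟩ | ⟨_, _, h2⟩ | ⟨_, _, h2⟩ <;> omega
  have hf₁0 : f₁ = 0 := eq_zero_of_eval_eq_zero _ _ f₁ heval1 hf₁deg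
  have hcoef : ∀ e : Fin 3 →₀ ℕ,
      (∑ d ∈ f.support, if e3 0 (d 1) (d 2) = e then coeff d f else 0) = 0 := by
    intro e
    have h := congrArg (coeff e) hf₁0
    rw [hf₁, coeff_sum, coeff_zero] at h
    simpa [coeff_monomial] using h
  have eta3 : ∀ (d : Fin 3 →₀ ℕ) {a b c : ℕ},
      d 0 = a → d 1 = b → d 2 = c → d = e3 a b c := by
    intro d a b c h0 h1 h2
    rw [← h0, ← h1, ← h2]
    exact (e3_eta d).symm
  have hB1 : ∀ i j : ℕ, i ≠ 0 → ¬(i = 1 ∧ j = 0) → coeff (e3 0 i j) f = 0 := by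
    intro i j hi hij
    have h := hcoef (e3 0 i j)
    have hk := key_single f.support (fun d => coeff d f)
        (fun d => e3 0 (d 1) (d 2) = e3 0 i j) (e3 0 i j)
        (by simp)
        (fun d hd hpd => by
          obtain ⟨-, h1, h2⟩ := e3_inj hpd
          rcases hsupp d hd with ⟨h0, -, -⟩ | ⟨h0, h1', -⟩ | ⟨h0, h1', h2'⟩
          · exact eta3 d h0 h1 h2
          · exact absurd (h1 ▸ h1') hi
          · exact absurd ⟨h1 ▸ h1', h2 ▸ h2'⟩ hij)
        (fun hA => by rwa [notMem_support_iff] at hA)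
    exact hk.symm.trans h
  have hB2 : ∀ j : ℕ, coeff (e3 0 0 j) f + coeff (e3 1 0 j) f = 0 := by
    intro j
    have h := hcoef (e3 0 0 j)
    have hk := key_two f.support (fun d => coeff d f)
        (fun d => e3 0 (d 1) (d 2) = e3 0 0 j) (e3 0 0 j) (e3 1 0 j)
        (by intro hE; exact absurd (e3_inj hE).1 (by omega))
        (by simp) (by simp)
        (fun d hd hpd => by
          obtain ⟨-, h1, h2⟩ := e3_inj hpd
          rcases hsupp d hd with ⟨h0, -, -⟩ | ⟨h0, h1', -⟩ | ⟨h0, h1', h2'⟩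
          · exact Or.inl (eta3 d h0 h1 h2)
          · exact Or.inr (eta3 d h0 h1' h2)
          · exact absurd (h1'.symm.trans h1) one_ne_zero)
        (fun hA => by rwa [notMem_support_iff] at hA)
        (fun hA => by rwa [notMem_support_iff] at hA)
    exact hk.symm.trans h
  have hB3 : coeff (e3 0 1 0) f + coeff (e3 1 1 0) f = 0 := by
    have h := hcoef (e3 0 1 0)
    have hk := key_two f.support (fun d => coeff d f)
        (fun d => e3 0 (d 1) (d 2) = e3 0 1 0) (e3 0 1 0) (e3 1 1 0)
        (by intro hE; exact absurd (e3_inj hE).1 (by omega))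
        (by simp) (by simp)
        (fun d hd hpd => by
          obtain ⟨-, h1, h2⟩ := e3_inj hpd
          rcases hsupp d hd with ⟨h0, -, -⟩ | ⟨h0, h1', -⟩ | ⟨h0, h1', h2'⟩
          · exact Or.inl (eta3 d h0 h1 h2)
          · exact absurd (h1'.symm.trans h1) (by omega)
          · exact Or.inr (eta3 d h0 h1' h2'))
        (fun hA => by rwa [notMem_support_iff] at hA)
        (fun hA => by rwa [notMem_support_iff] at hA)
    exact hk.symm.trans h
  -- the single-variable polynomial recording evaluations at (0, 1, b)
  set q : Polynomial F :=
    ∑ d ∈ f.support,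
      if d 0 = 0 then Polynomial.C (coeff d f) * Polynomial.X ^ (d 2) else 0
    with hq
  have hqe : ∀ b : F, q.eval b = 0 := by
    intro b
    have h1 : q.eval b
        = ∑ d ∈ f.support, (if d 0 = 0 then coeff d f * b ^ d 2 else 0) := by
      rw [hq, Polynomial.eval_finset_sum]
      refine Finset.sum_congr rfl fun d _ => ?_
      split <;> simp
    have h2 : eval ![0, 1, b] f
        = ∑ d ∈ f.support, (if d 0 = 0 then coeff d f * b ^ d 2 else 0) := by
      rw [eval_eq']
      refine Finset.sum_congr rfl fun d _ => ?_
      rw [Fin.prod_univ_three]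
      by_cases h0 : d 0 = 0
      · rw [if_pos h0, h0]
        simp
      · rw [if_neg h0]
        simp [zero_pow h0]
    rw [h1, ← h2]
    exact hv _ (Or.inr (Or.inl ⟨by simp, by simp⟩))
  have hqdeg : q.natDegree < Fintype.card F := by
    have hle : q.natDegree ≤ Q - 1 := by
      rw [hq]
      refine Polynomial.natDegree_sum_le_of_forall_le _ _ fun d hd => ?_
      by_cases h0 : d 0 = 0
      · rw [if_pos h0]
        refine (Polynomial.natDegree_C_mul_X_pow_le _ _).trans ?_
        rcases hsupp d hd with ⟨-, -, h⟩ | ⟨-, -, h⟩ | ⟨-, -, h⟩ <;> omega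
      · rw [if_neg h0]
        simp
    omega
  have hq0 : q = 0 :=
    Polynomial.eq_zero_of_natDegree_lt_card_of_eval_eq_zero q (f := id)
      Function.injective_id (fun b => hqe b) hqdeg
  have hqc : ∀ jj : ℕ,
      (∑ d ∈ f.support, if d 0 = 0 ∧ d 2 = jj then coeff d f else 0) = 0 := by
    intro jj
    have h := congrArg (fun p : Polynomial F => p.coeff jj) hq0
    simp only [hq, Polynomial.finset_sum_coeff, Polynomial.coeff_zero] at h
    refine Eq.trans (Finset.sum_congr rfl fun d _ => ?_) h
    by_cases h0 : d 0 = 0 <;> by_cases h2 : d 2 = jj <;>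
      simp [h0, h2, Polynomial.coeff_C_mul, Polynomial.coeff_X_pow,
        show (jj = d 2) ↔ (d 2 = jj) from eq_comm]
  have hC1 : ∀ j : ℕ, j ≠ 0 → coeff (e3 0 0 j) f = 0 := by
    intro j hj
    have h := hqc j
    have hk := key_single f.support (fun d => coeff d f)
        (fun d => d 0 = 0 ∧ d 2 = j) (e3 0 0 j)
        (by simp)
        (fun d hd hpd => by
          obtain ⟨h0, h2⟩ := hpd
          rcases hsupp d hd with ⟨-, -, -⟩ | ⟨h0', -, -⟩ | ⟨h0', -, -⟩
          · by_cases h1 : d 1 = 0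
            · exact eta3 d h0 h1 h2
            · exfalso
              have hz := hB1 (d 1) (d 2) h1 (fun hc => hj (h2.symm.trans hc.2))
              exact (mem_support_iff.mp hd) (by rw [eta3 d h0 rfl rfl]; exact hz)
          · exact absurd (h0 ▸ h0') (by omega)
          · exact absurd (h0 ▸ h0') (by omega))
        (fun hA => by rwa [notMem_support_iff] at hA)
    exact hk.symm.trans h
  have hC2 : coeff (e3 0 0 0) f + coeff (e3 0 1 0) f = 0 := by
    have h := hqc 0
    have hk := key_two f.support (fun d => coeff d f)
        (fun d => d 0 = 0 ∧ d 2 = 0) (e3 0 0 0) (e3 0 1 0)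
        (by intro hE; exact absurd (e3_inj hE).2.1 (by omega))
        (by simp) (by simp)
        (fun d hd hpd => by
          obtain ⟨h0, h2⟩ := hpd
          rcases hsupp d hd with ⟨-, -, -⟩ | ⟨h0', -, -⟩ | ⟨h0', -, -⟩
          · by_cases h1 : d 1 = 0
            · exact Or.inl (eta3 d h0 h1 h2)
            · by_cases h1' : d 1 = 1
              · exact Or.inr (eta3 d h0 h1' h2)
              · exfalso
                have hz := hB1 (d 1) (d 2) h1 (fun hc => h1' hc.1)
                exact (mem_support_iff.mp hd)
                  (by rw [eta3 d h0 rfl rfl]; exact hz)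
          · exact absurd (h0 ▸ h0') (by omega)
          · exact absurd (h0 ▸ h0') (by omega))
        (fun hA => by rwa [notMem_support_iff] at hA)
        (fun hA => by rwa [notMem_support_iff] at hA)
    exact hk.symm.trans h
  have hD : coeff (e3 0 0 0) f = 0 := by
    have hE : eval ![0, 0, 1] f = 0 :=
      hv _ (Or.inr (Or.inr ⟨by simp, by simp, by simp⟩))
    have h2 : eval ![0, 0, 1] f
        = ∑ d ∈ f.support, (if d 0 = 0 ∧ d 1 = 0 then coeff d f else 0) := by
      rw [eval_eq']
      refine Finset.sum_congr rfl fun d _ => ?_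
      rw [Fin.prod_univ_three]
      by_cases h0 : d 0 = 0 <;> by_cases h1 : d 1 = 0 <;>
        simp [h0, h1, zero_pow]
    have hk := key_single f.support (fun d => coeff d f)
        (fun d => d 0 = 0 ∧ d 1 = 0) (e3 0 0 0)
        (by simp)
        (fun d hd hpd => by
          obtain ⟨h0, h1⟩ := hpd
          rcases hsupp d hd with ⟨-, -, -⟩ | ⟨h0', -, -⟩ | ⟨h0', -, -⟩
          · by_cases h2' : d 2 = 0
            · exact eta3 d h0 h1 h2'
            · exfalso
              have hz := hC1 (d 2) h2'
              exact (mem_support_iff.mp hd) (by rw [eta3 d h0 h1 rfl]; exact hz)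
          · exact absurd (h0 ▸ h0') (by omega)
          · exact absurd (h0 ▸ h0') (by omega))
        (fun hA => by rwa [notMem_support_iff] at hA)
    exact hk.symm.trans (h2.symm.trans hE)
  have h000 : coeff (e3 0 0 0) f = 0 := hD
  have h010 : coeff (e3 0 1 0) f = 0 := by
    have h := hC2; rw [h000, zero_add] at h; exact h
  have h00j : ∀ j, coeff (e3 0 0 j) f = 0 := by
    intro j
    by_cases hj : j = 0
    · rw [hj]; exact h000
    · exact hC1 j hj
  have h10j : ∀ j, coeff (e3 1 0 j) f = 0 := by
    intro j
    have h := hB2 j; rw [h00j j, zero_add] at h; exact h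
  have h110 : coeff (e3 1 1 0) f = 0 := by
    have h := hB3; rw [h010, zero_add] at h; exact h
  refine MvPolynomial.ext _ _ fun d => ?_
  rw [coeff_zero]
  by_cases hd : d ∈ f.support
  · rcases hsupp d hd with ⟨h0, -, -⟩ | ⟨h0, h1, -⟩ | ⟨h0, h1, h2⟩
    · by_cases h1 : d 1 = 0
      · rw [eta3 d h0 h1 rfl]; exact h00j _
      · by_cases hc : d 1 = 1 ∧ d 2 = 0
        · rw [eta3 d h0 hc.1 hc.2]; exact h010
        · rw [eta3 d h0 rfl rfl]; exact hB1 _ _ h1 hc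
    · rw [eta3 d h0 h1 rfl]; exact h10j _
    · rw [eta3 d h0 h1 h2]; exact h110
  · exact notMem_support_iff.mp hd

end Stmt9Aux

namespace Stmt9Aux

lemma monomial_mem_restrictSupport {F : Type} [Field F] {s : Set (Fin 3 →₀ ℕ)}
    {u : Fin 3 →₀ ℕ} (hu : u ∈ s) (c : F) :
    (monomial u c : MvPolynomial (Fin 3) F) ∈ restrictSupport F s := by
  classical
  rw [restrictSupport, AddMonoidAlgebra.mem_supported']
  intro x hx
  show coeff x (monomial u c) = 0
  rw [coeff_monomial, if_neg]
  rintro rfl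
  exact hx hu

end Stmt9Aux


open Stmt9Aux

/-- for Q > 2, the monomial set
{x₁^{a₁}x₂^{a₂} : 0 ≤ a₁,a₂ ≤ Q-1} ∪ {x₀x₂^{a₂} : 0 ≤ a₂ ≤ Q-1} ∪ {x₀x₁}
has Q²+Q+1 elements, which is also |P²|, and evaluation on P² is injective on its span. -/
theorem stmt_9 (F : Type) [Field F] [Fintype F] (Q : ℕ)
    (hQ : Q = Fintype.card F) (hQ2 : 2 < Q)
    (P2 : Set (Fin 3 → F))
    (hP2 : P2 = {v | v 0 = 1} ∪ {v | v 0 = 0 ∧ v 1 = 1} ∪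
        {v | v 0 = 0 ∧ v 1 = 0 ∧ v 2 = 1})
    (B : Set (MvPolynomial (Fin 3) F))
    (hB : B = {p | ∃ a1 ≤ Q - 1, ∃ a2 ≤ Q - 1, p = X 1 ^ a1 * X 2 ^ a2} ∪
        {p | ∃ a2 ≤ Q - 1, p = X 0 * X 2 ^ a2} ∪ {X 0 * X 1}) :
    B.ncard = Q ^ 2 + Q + 1 ∧ P2.ncard = Q ^ 2 + Q + 1 ∧
      ∀ f ∈ Submodule.span F B, (∀ v ∈ P2, eval v f = 0) → f = 0 := by
  classical
  subst hP2 hB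
  have inj1 : Function.Injective
      (fun a : ℕ × ℕ => (X 1 ^ a.1 * X 2 ^ a.2 : MvPolynomial (Fin 3) F)) := by
    rintro ⟨a1, a2⟩ ⟨b1, b2⟩ h
    simp only at h
    rw [mon1, mon1] at h
    obtain ⟨-, h1, h2⟩ := e3_inj (monomial_left_injective one_ne_zero h)
    simp [Prod.ext_iff, h1, h2]
  have inj2 : Function.Injective
      (fun a : ℕ => (X 0 * X 2 ^ a : MvPolynomial (Fin 3) F)) := by
    intro a b h
    simp only at h
    rw [mon2, mon2] at h
    exact (e3_inj (monomial_left_injective one_ne_zero h)).2.2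
  refine ⟨?_, ?_, ?_⟩
  · -- cardinality of B
    have e1 : {p : MvPolynomial (Fin 3) F |
          ∃ a1 ≤ Q - 1, ∃ a2 ≤ Q - 1, p = X 1 ^ a1 * X 2 ^ a2}
        = ↑((Finset.Iic (Q - 1) ×ˢ Finset.Iic (Q - 1)).image
            (fun a : ℕ × ℕ => (X 1 ^ a.1 * X 2 ^ a.2 : MvPolynomial (Fin 3) F))) := by
      ext p
      simp only [Set.mem_setOf_eq, Finset.coe_image, Set.mem_image, Finset.mem_coe,
        Finset.mem_product, Finset.mem_Iic]
      constructor
      · rintro ⟨a1, h1, a2, h2, rfl⟩; exact ⟨(a1, a2), ⟨h1, h2⟩, rfl⟩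
      · rintro ⟨⟨a1, a2⟩, ⟨h1, h2⟩, rfl⟩; exact ⟨a1, h1, a2, h2, rfl⟩
    have e2 : {p : MvPolynomial (Fin 3) F | ∃ a2 ≤ Q - 1, p = X 0 * X 2 ^ a2}
        = ↑((Finset.Iic (Q - 1)).image
            (fun a : ℕ => (X 0 * X 2 ^ a : MvPolynomial (Fin 3) F))) := by
      ext p
      simp only [Set.mem_setOf_eq, Finset.coe_image, Set.mem_image, Finset.mem_coe,
        Finset.mem_Iic]
      constructor
      · rintro ⟨a2, h2, rfl⟩; exact ⟨a2, h2, rfl⟩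
      · rintro ⟨a2, h2, rfl⟩; exact ⟨a2, h2, rfl⟩
    have d12 : Disjoint
        {p : MvPolynomial (Fin 3) F | ∃ a1 ≤ Q - 1, ∃ a2 ≤ Q - 1, p = X 1 ^ a1 * X 2 ^ a2}
        {p : MvPolynomial (Fin 3) F | ∃ a2 ≤ Q - 1, p = X 0 * X 2 ^ a2} := by
      rw [Set.disjoint_left]
      rintro p ⟨a1, -, a2, -, rfl⟩ ⟨b, -, hp⟩
      rw [mon1, mon2] at hp
      have := (e3_inj (monomial_left_injective one_ne_zero hp)).1
      omega
    have d3 : Disjoint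
        ({p : MvPolynomial (Fin 3) F | ∃ a1 ≤ Q - 1, ∃ a2 ≤ Q - 1, p = X 1 ^ a1 * X 2 ^ a2} ∪
          {p : MvPolynomial (Fin 3) F | ∃ a2 ≤ Q - 1, p = X 0 * X 2 ^ a2})
        {(X 0 * X 1 : MvPolynomial (Fin 3) F)} := by
      rw [Set.disjoint_right]
      rintro p hp hps
      rw [Set.mem_singleton_iff] at hp
      subst hp
      rcases hps with ⟨a1, -, a2, -, hp⟩ | ⟨b, -, hp⟩
      · rw [mon1, mon3] at hp
        have := (e3_inj (monomial_left_injective one_ne_zero hp)).1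
        omega
      · rw [mon2, mon3] at hp
        have := (e3_inj (monomial_left_injective one_ne_zero hp)).2.1
        omega
    rw [Set.ncard_union_eq d3 (by rw [e1, e2]; exact
        ((Finset.finite_toSet _).union (Finset.finite_toSet _))) (Set.finite_singleton _),
      Set.ncard_union_eq d12 (by rw [e1]; exact Finset.finite_toSet _)
        (by rw [e2]; exact Finset.finite_toSet _),
      e1, e2, Set.ncard_coe_finset, Set.ncard_coe_finset, Set.ncard_singleton,
      Finset.card_image_of_injective _ inj1, Finset.card_image_of_injective _ inj2,
      Finset.card_product, Nat.card_Iic, show Q - 1 + 1 = Q by omega, pow_two]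
  · -- cardinality of P2
    have g1 : Function.Injective (fun p : F × F => ![1, p.1, p.2]) := by
      rintro ⟨a1, a2⟩ ⟨b1, b2⟩ h
      have h1 := congrFun h 1
      have h2 := congrFun h 2
      simp at h1 h2
      simp [Prod.ext_iff, h1, h2]
    have g2 : Function.Injective (fun b : F => ![0, 1, b]) := by
      intro a b h
      have h2 := congrFun h 2
      simpa using h2
    have p1 : {v : Fin 3 → F | v 0 = 1} = Set.range (fun p : F × F => ![1, p.1, p.2]) := by
      ext v
      simp only [Set.mem_setOf_eq, Set.mem_range]
      constructor
      · intro hv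
        refine ⟨(v 1, v 2), ?_⟩
        funext i; fin_cases i <;> simp [hv]
      · rintro ⟨p, rfl⟩; simp
    have p2 : {v : Fin 3 → F | v 0 = 0 ∧ v 1 = 1} = Set.range (fun b : F => ![0, 1, b]) := by
      ext v
      simp only [Set.mem_setOf_eq, Set.mem_range]
      constructor
      · rintro ⟨h0, h1⟩
        refine ⟨v 2, ?_⟩
        funext i; fin_cases i <;> simp [h0, h1]
      · rintro ⟨b, rfl⟩; simp
    have p3 : {v : Fin 3 → F | v 0 = 0 ∧ v 1 = 0 ∧ v 2 = 1} = {![0, 0, 1]} := by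
      ext v
      simp only [Set.mem_setOf_eq, Set.mem_singleton_iff]
      constructor
      · rintro ⟨h0, h1, h2⟩
        funext i; fin_cases i <;> simp [h0, h1, h2]
      · rintro rfl
        refine ⟨by simp, by simp, by simp⟩
    have d12 : Disjoint {v : Fin 3 → F | v 0 = 1} {v : Fin 3 → F | v 0 = 0 ∧ v 1 = 1} := by
      rw [Set.disjoint_left]
      rintro v hv1 ⟨h0, -⟩
      rw [Set.mem_setOf_eq] at hv1
      rw [hv1] at h0
      exact one_ne_zero h0
    have d3 : Disjoint ({v : Fin 3 → F | v 0 = 1} ∪ {v : Fin 3 → F | v 0 = 0 ∧ v 1 = 1})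
        {v : Fin 3 → F | v 0 = 0 ∧ v 1 = 0 ∧ v 2 = 1} := by
      rw [Set.disjoint_right]
      rintro v ⟨h0, h1, -⟩ (hm | ⟨-, hm⟩)
      · rw [Set.mem_setOf_eq] at hm; rw [hm] at h0; exact one_ne_zero h0
      · rw [hm] at h1; exact one_ne_zero h1
    have c1 : ({v : Fin 3 → F | v 0 = 1}).ncard = Q * Q := by
      rw [p1, ← Set.image_univ, Set.ncard_image_of_injective _ g1, Set.ncard_univ,
        Nat.card_eq_fintype_card, Fintype.card_prod, ← hQ]
    have c2 : ({v : Fin 3 → F | v 0 = 0 ∧ v 1 = 1}).ncard = Q := by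
      rw [p2, ← Set.image_univ, Set.ncard_image_of_injective _ g2, Set.ncard_univ,
        Nat.card_eq_fintype_card, ← hQ]
    have c3 : ({v : Fin 3 → F | v 0 = 0 ∧ v 1 = 0 ∧ v 2 = 1}).ncard = 1 := by
      rw [p3]; exact Set.ncard_singleton _
    rw [Set.ncard_union_eq d3 (Set.toFinite _) (Set.toFinite _),
      Set.ncard_union_eq d12 (Set.toFinite _) (Set.toFinite _), c1, c2, c3, pow_two]
  · -- injectivity of evaluation on the span
    intro f hf hv
    refine aux_inj Q hQ hQ2 f ?_ ?_
    · have hle : Submodule.span F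
          ({p : MvPolynomial (Fin 3) F |
              ∃ a1 ≤ Q - 1, ∃ a2 ≤ Q - 1, p = X 1 ^ a1 * X 2 ^ a2} ∪
            {p : MvPolynomial (Fin 3) F | ∃ a2 ≤ Q - 1, p = X 0 * X 2 ^ a2} ∪
            {X 0 * X 1}) ≤ restrictSupport F (GoodSet Q) := by
        rw [Submodule.span_le]
        rintro p ((⟨a1, h1, a2, h2, rfl⟩ | ⟨a2, h2, rfl⟩) | rfl)
        · rw [mon1]
          exact monomial_mem_restrictSupport (Or.inl ⟨by simp, by simpa using h1,
            by simpa using h2⟩) 1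
        · rw [mon2]
          exact monomial_mem_restrictSupport (Or.inr (Or.inl ⟨by simp, by simp,
            by simpa using h2⟩)) 1
        · rw [mon3]
          exact monomial_mem_restrictSupport (Or.inr (Or.inr ⟨by simp, by simp, by simp⟩)) 1
      have hmem := hle hf
      rw [restrictSupport, AddMonoidAlgebra.mem_supported] at hmem
      exact fun d hd => hmem (Finset.mem_coe.mpr hd)
    · intro v hvP
      apply hv
      simp only [Set.mem_union, Set.mem_setOf_eq]
      tauto
end

section
/- Let C ⊆ F_{q^s}^n be an F_{q^s}-linear code and let Tr: F_{q^s} → F_q be the field trace, applied componentwise. Then the dual (over F_q) of the subfield subcode C ∩ F_q^n equals Tr(C^⊥), where C^⊥ is the dual of C over F_{q^s} (intersected with nothing; Tr(C^⊥) ⊆ F_q^n). -/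
open LinearMap (BilinForm)

/-- The dot-product bilinear form on `Fin n → K`. -/
noncomputable def dotForm (K : Type) [Field K] (n : ℕ) : BilinForm K (Fin n → K) :=
  LinearMap.mk₂ K (fun v w => ∑ i, v i * w i)
    (fun v v' w => by simp [add_mul, Finset.sum_add_distrib])
    (fun a v w => by simp [Finset.mul_sum, mul_assoc])
    (fun v w w' => by simp [mul_add, Finset.sum_add_distrib])
    (fun a v w => by simp [Finset.mul_sum, mul_comm, mul_assoc, mul_left_comm])

lemma dotForm_apply (K : Type) [Field K] (n : ℕ) (v w : Fin n → K) :
    dotForm K n v w = ∑ i, v i * w i := rfl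

lemma dotForm_isRefl (K : Type) [Field K] (n : ℕ) : (dotForm K n).IsRefl := by
  intro v w h
  simpa [dotForm_apply, mul_comm] using h

lemma dotForm_nondeg (K : Type) [Field K] (n : ℕ) : (dotForm K n).Nondegenerate := by
  refine (LinearMap.IsRefl.nondegenerate_iff_separatingLeft (dotForm_isRefl K n)).mpr ?_
  intro v hv
  funext j
  have := hv (Pi.single j 1)
  simp only [dotForm_apply] at this
  classical
  rw [Finset.sum_eq_single j (fun i _ hij => by simp [Pi.single_apply, hij])
    (by simp)] at this
  simpa using this

/-- Delsarte: the dual over F_q of the subfield subcode C ∩ F_q^n equals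
Tr(C^⊥), everything embedded in F_{q^s}^n via the inclusion F_q ⊆ F_{q^s}
(realized as the range of the algebra map). -/
theorem stmt_11 (Fq F : Type) [Field Fq] [Fintype Fq] [Field F] [Fintype F]
    [Algebra Fq F] (n : ℕ) (C : Submodule F (Fin n → F)) :
    {y : Fin n → F | (∀ i, y i ∈ (algebraMap Fq F).range) ∧
        ∀ c ∈ C, (∀ i, c i ∈ (algebraMap Fq F).range) → ∑ i, y i * c i = 0} =
      {y : Fin n → F | ∃ x : Fin n → F, (∀ c ∈ C, ∑ i, x i * c i = 0) ∧
        ∀ i, y i = algebraMap Fq F (Algebra.trace Fq F (x i))} := by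
  classical
  have : Module.Finite Fq F := Module.Finite.of_finite
  have : FiniteDimensional Fq F := this
  set e : Fq →+* F := algebraMap Fq F with he
  have einj : Function.Injective e := e.injective
  set Tr : F →ₗ[Fq] Fq := Algebra.trace Fq F with hTr
  set B : BilinForm F (Fin n → F) := dotForm F n with hB
  set Bq : BilinForm Fq (Fin n → Fq) := dotForm Fq n with hBq
  set D : Submodule F (Fin n → F) := B.orthogonal C with hD
  -- embedding of Fq^n into F^n
  set E : (Fin n → Fq) →ₗ[Fq] (Fin n → F) :=
    (LinearMap.pi fun i => (Algebra.linearMap Fq F).comp (LinearMap.proj i)) with hE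
  have E_apply : ∀ (b : Fin n → Fq) (i : Fin n), E b i = e (b i) := fun b i => rfl
  -- componentwise trace
  set tr : (Fin n → F) →ₗ[Fq] (Fin n → Fq) :=
    (LinearMap.pi fun i => Tr.comp (LinearMap.proj i)) with htr
  have tr_apply : ∀ (x : Fin n → F) (i : Fin n), tr x i = Tr (x i) := fun x i => rfl
  set S : Submodule Fq (Fin n → Fq) := (C.restrictScalars Fq).comap E with hS
  set T : Submodule Fq (Fin n → Fq) := (D.restrictScalars Fq).map tr with hT
  -- key computation: ∑ Tr(x i) * b i = Tr (∑ x i * e (b i))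
  have key : ∀ (x : Fin n → F) (b : Fin n → Fq),
      ∑ i, Tr (x i) * b i = Tr (∑ i, x i * e (b i)) := by
    intro x b
    rw [map_sum]
    refine Finset.sum_congr rfl fun i _ => ?_
    have : x i * e (b i) = b i • x i := by
      rw [Algebra.smul_def, mul_comm]
    rw [this, map_smul]
    simp [mul_comm]
  -- easy inclusion: T ≤ Bq.orthogonal S
  have le1 : T ≤ Bq.orthogonal S := by
    rintro t ⟨x, hx, rfl⟩ b hb
    have hxD : x ∈ D := hx
    have hEb : E b ∈ C := hb
    have : B x (E b) = 0 := dotForm_isRefl F n _ _ (hxD (E b) hEb)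
    show Bq b (tr x) = 0
    rw [hBq, dotForm_apply]
    calc ∑ i, b i * tr x i = ∑ i, Tr (x i) * b i := by
          simp_rw [tr_apply, mul_comm]
      _ = Tr (∑ i, x i * e (b i)) := key x b
      _ = 0 := by
          rw [show (∑ i, x i * e (b i)) = B x (E b) from rfl, this, map_zero]
  -- reverse inclusion: Bq.orthogonal T ≤ S
  have le2 : Bq.orthogonal T ≤ S := by
    intro b hb
    -- the F-subspace {B x (E b) : x ∈ D} of F
    set f : (Fin n → F) →ₗ[F] F := B.flip (E b) with hf
    set M : Submodule F F := D.map f with hM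
    have htr0 : ∀ z ∈ M, Tr z = 0 := by
      rintro z ⟨x, hx, rfl⟩
      have hxt : tr x ∈ T := ⟨x, hx, rfl⟩
      have h0 : Bq (tr x) b = 0 := hb (tr x) hxt
      rw [hBq, dotForm_apply] at h0
      have : f x = ∑ i, x i * e (b i) := rfl
      rw [this, ← key x b]
      simpa [tr_apply] using h0
    have hMbot : M = ⊥ := by
      rcases (Ideal.eq_bot_or_top M) with h | h
      · exact h
      · exfalso
        apply Algebra.trace_ne_zero Fq F
        apply LinearMap.ext
        intro z
        have : z ∈ M := h ▸ Submodule.mem_top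
        simpa using htr0 z this
    have hEbD : E b ∈ B.orthogonal D := by
      intro x hx
      have hfx : f x ∈ M := ⟨x, hx, rfl⟩
      rw [hMbot, Submodule.mem_bot] at hfx
      exact hfx
    have hOD : B.orthogonal D = C := by
      rw [hD]
      exact (dotForm F n).orthogonal_orthogonal (dotForm_nondeg F n) (dotForm_isRefl F n) C
    show E b ∈ C
    rw [← hOD]
    exact hEbD
  have key2 : Bq.orthogonal S = T := by
    apply le_antisymm _ le1
    have := LinearMap.BilinForm.orthogonal_le (B := Bq) le2
    rw [(dotForm Fq n).orthogonal_orthogonal (dotForm_nondeg Fq n) (dotForm_isRefl Fq n) T]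
      at this
    exact this
  -- now the set equality
  ext y
  simp only [Set.mem_setOf_eq]
  constructor
  · rintro ⟨hy, hperp⟩
    choose b hbspec using hy
    have hyE : y = E b := by funext i; rw [E_apply, hbspec]
    have hbO : b ∈ Bq.orthogonal S := by
      intro s hsS
      have hEs : E s ∈ C := hsS
      have hrange : ∀ i, E s i ∈ e.range := fun i => ⟨s i, rfl⟩
      have h0 : ∑ i, y i * E s i = 0 := hperp (E s) hEs hrange
      have : e (∑ i, b i * s i) = 0 := by
        rw [map_sum]
        rw [hyE] at h0
        simpa [E_apply, map_mul] using h0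
      have hsum : ∑ i, b i * s i = 0 := einj (by simpa using this)
      show Bq s b = 0
      rw [hBq, dotForm_apply, ← hsum]
      exact Finset.sum_congr rfl fun i _ => mul_comm _ _
    rw [key2] at hbO
    obtain ⟨x, hxD, hxb⟩ := hbO
    refine ⟨x, ?_, ?_⟩
    · intro c hc
      have hxD' : x ∈ D := hxD
      have := dotForm_isRefl F n _ _ (hxD' c hc)
      simpa [hB, dotForm_apply] using this
    · intro i
      rw [← hbspec i, ← hxb]
      rfl
  · rintro ⟨x, hxperp, hxy⟩
    constructor
    · intro i
      exact hxy i ▸ ⟨Tr (x i), rfl⟩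
    · intro c hc hcr
      choose b hbspec using hcr
      have : ∑ i, y i * c i = e (∑ i, Tr (x i) * b i) := by
        rw [map_sum]
        refine Finset.sum_congr rfl fun i _ => ?_
        rw [hxy i, ← hbspec i, map_mul]
      rw [this, key x b]
      have : (∑ i, x i * e (b i)) = ∑ i, x i * c i := by
        refine Finset.sum_congr rfl fun i _ => by rw [hbspec i]
      rw [this, hxperp c hc, map_zero, map_zero]
end

section
/- Let F_{q^s} ⊇ F_q be finite fields and C ⊆ F_{q^s}^n a linear code that is Galois invariant, i.e., C^q = C where the q-th power is taken componentwise. Then Tr(C) = C ∩ F_q^n, where Tr is the componentwise field trace from F_{q^s} to F_q. -/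
/-- if C ⊆ F_{q^s}^n is Galois invariant (C^q = C componentwise), then
Tr(C) = C ∩ F_q^n, embedded in F_{q^s}^n via the inclusion F_q ⊆ F_{q^s}. -/
theorem stmt_12 (Fq F : Type) [Field Fq] [Fintype Fq] [Field F] [Fintype F]
    [Algebra Fq F] (n : ℕ) (C : Submodule F (Fin n → F))
    (hGal : (fun c : Fin n → F => fun i => c i ^ Fintype.card Fq) ''
        (C : Set (Fin n → F)) = (C : Set (Fin n → F))) :
    {y : Fin n → F | ∃ x ∈ C, ∀ i, y i = algebraMap Fq F (Algebra.trace Fq F (x i))} =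
      {y : Fin n → F | y ∈ C ∧ ∀ i, y i ∈ (algebraMap Fq F).range} := by
  classical
  set q := Fintype.card Fq with hq
  -- characteristic setup
  set p := ringChar Fq with hpdef
  haveI hp : Fact p.Prime := ⟨CharP.char_is_prime Fq p⟩
  obtain ⟨m, -, hcard⟩ := FiniteField.card Fq p
  haveI : CharP F p := charP_of_injective_algebraMap (algebraMap Fq F).injective p
  -- Frobenius as an Fq-algebra equivalence
  have hpow_alg : ∀ a : Fq, (algebraMap Fq F a) ^ q = algebraMap Fq F a := by
    intro a
    rw [← map_pow, FiniteField.pow_card]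
  let f : F →ₐ[Fq] F :=
    { toRingHom := iterateFrobenius F p m
      commutes' := fun a => by
        show iterateFrobenius F p m (algebraMap Fq F a) = algebraMap Fq F a
        rw [iterateFrobenius_def, ← hcard, hpow_alg] }
  have hf : ∀ x : F, f x = x ^ q := fun x => by
    show iterateFrobenius F p m x = x ^ q
    rw [iterateFrobenius_def, ← hcard]
  have hfbij : Function.Bijective f :=
    (Finite.injective_iff_bijective).mp f.toRingHom.injective
  let φ : F ≃ₐ[Fq] F := AlgEquiv.ofBijective f hfbij
  have hφ : ∀ x : F, φ x = x ^ q := hf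
  have hφpow : ∀ (j : ℕ) (x : F), (φ ^ j) x = x ^ q ^ j := by
    intro j
    induction j with
    | zero => intro x; simp
    | succ j ih =>
      intro x
      rw [pow_succ', AlgEquiv.mul_apply, hφ, ih, ← pow_mul, pow_succ', mul_comm]
  -- dimension and cardinality
  set s := Module.finrank Fq F with hs
  have hcardF : Fintype.card F = q ^ s := Module.card_eq_pow_finrank
  have hq2 : 2 ≤ q := Fintype.one_lt_card
  -- order of Frobenius is s
  have hφs : φ ^ s = 1 := by
    ext x
    rw [hφpow, ← hcardF]
    exact FiniteField.pow_card x
  have hGalcard : Fintype.card (F ≃ₐ[Fq] F) = s := by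
    rw [← Nat.card_eq_fintype_card]; exact IsGalois.card_aut_eq_finrank Fq F
  have hspos : 0 < s := Module.finrank_pos
  have horder : orderOf φ = s := by
    have hdvd : orderOf φ ∣ s := orderOf_dvd_of_pow_eq_one hφs
    rcases lt_or_eq_of_le (Nat.le_of_dvd hspos hdvd) with hlt | heq
    · exfalso
      set d := orderOf φ with hd
      have hdpos : 0 < d := orderOf_pos φ
      have hall : ∀ x : F, x ^ q ^ d = x := by
        intro x
        have := congrArg (fun σ : F ≃ₐ[Fq] F => σ x) (pow_orderOf_eq_one φ)
        simpa only [hφpow, AlgEquiv.one_apply] using this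
      obtain ⟨g, hg⟩ := IsCyclic.exists_generator (α := Fˣ)
      have hog : orderOf g = Fintype.card Fˣ := by
        rw [orderOf_eq_card_of_forall_mem_zpowers hg, Nat.card_eq_fintype_card]
      have hqd1 : 1 ≤ q ^ d := Nat.one_le_pow _ _ (by omega)
      have hgpow : g ^ (q ^ d - 1) = 1 := by
        have h1 : (g : F) ^ q ^ d = (g : F) := hall g
        have h2 : g ^ q ^ d = g := Units.ext (by push_cast; exact h1)
        have h3 : g ^ (q ^ d - 1) * g = g := by
          rw [← pow_succ, Nat.sub_add_cancel hqd1, h2]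
        calc g ^ (q ^ d - 1) = g ^ (q ^ d - 1) * g * g⁻¹ := by group
          _ = g * g⁻¹ := by rw [h3]
          _ = 1 := mul_inv_cancel g
      have hdvd1 : Fintype.card Fˣ ∣ q ^ d - 1 := hog ▸ orderOf_dvd_of_pow_eq_one hgpow
      have hcardU : Fintype.card Fˣ = Fintype.card F - 1 := Fintype.card_units (α := F)
      have hqdpos : 0 < q ^ d - 1 := by
        have : 2 ≤ q ^ d := le_trans hq2 (Nat.le_self_pow (by omega) q)
        omega
      have hle : Fintype.card F - 1 ≤ q ^ d - 1 := hcardU ▸ Nat.le_of_dvd hqdpos hdvd1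
      have hltpow : q ^ d < q ^ s := Nat.pow_lt_pow_right (by omega) hlt
      have hF2 : 2 ≤ Fintype.card F := Fintype.one_lt_card
      omega
    · exact heq
  -- every automorphism is a power of Frobenius
  have hgen : ∀ σ : F ≃ₐ[Fq] F, ∃ j : ℕ, φ ^ j = σ := by
    intro σ
    have htop : Subgroup.zpowers φ = ⊤ := by
      apply Subgroup.eq_top_of_card_eq
      rw [Nat.card_zpowers, horder, Nat.card_eq_fintype_card, hGalcard]
    have : σ ∈ Subgroup.zpowers φ := htop ▸ Subgroup.mem_top σ
    rw [← mem_powers_iff_mem_zpowers] at this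
    exact this
  -- C is stable under all automorphisms, coordinatewise
  have hCstab : ∀ (j : ℕ), ∀ c ∈ C, (fun i => (φ ^ j) (c i)) ∈ C := by
    intro j
    induction j with
    | zero => intro c hc; simpa using hc
    | succ j ih =>
      intro c hc
      have hc' : (fun i => c i ^ q) ∈ C := by
        have : (fun i => c i ^ q) ∈
            ((fun c : Fin n → F => fun i => c i ^ Fintype.card Fq) ''
              (C : Set (Fin n → F))) := ⟨c, hc, rfl⟩
        rw [hGal] at this
        exact this
      have heq : (fun i => (φ ^ (j + 1)) (c i)) = fun i => (φ ^ j) (c i ^ q) := by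
        funext i
        rw [pow_succ, AlgEquiv.mul_apply, hφ]
      rw [heq]
      exact ih _ hc'
  have hCstab' : ∀ (σ : F ≃ₐ[Fq] F), ∀ c ∈ C, (fun i => σ (c i)) ∈ C := by
    intro σ c hc
    obtain ⟨j, hj⟩ := hgen σ
    rw [← hj]
    exact hCstab j c hc
  -- main proof
  ext y
  simp only [Set.mem_setOf_eq]
  constructor
  · rintro ⟨x, hx, hy⟩
    have hyeq : y = ∑ σ : F ≃ₐ[Fq] F, (fun i => σ (x i)) := by
      funext i
      rw [hy i, trace_eq_sum_automorphisms]
      simp [Finset.sum_apply]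
    constructor
    · rw [hyeq]
      exact Submodule.sum_mem C fun σ _ => hCstab' σ x hx
    · intro i
      exact ⟨Algebra.trace Fq F (x i), (hy i).symm⟩
  · rintro ⟨hyC, hyr⟩
    choose a ha using hyr
    obtain ⟨α, hα⟩ := Algebra.trace_surjective Fq F 1
    refine ⟨α • y, Submodule.smul_mem C α hyC, fun i => ?_⟩
    have hxi : (α • y) i = a i • α := by
      simp only [Pi.smul_apply, smul_eq_mul]
      rw [← ha i, Algebra.smul_def, mul_comm]
    rw [hxi, LinearMap.map_smul_of_tower]
    rw [hα, smul_eq_mul, mul_one, ha i]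
end

section
/- Let F_{q^s} ⊇ F_q be finite fields and C ⊆ F_{q^s}^n a Galois invariant linear code (C^q = C). Then the minimum distance of the dual of the subfield subcode satisfies wt((C ∩ F_q^n)^⊥) ≥ wt(C^⊥), where the first dual is over F_q and the second over F_{q^s}. -/
set_option linter.unusedSectionVars false

open Finset Polynomial

section Aux

variable {Fq F : Type} [Field Fq] [Fintype Fq] [Field F] [Fintype F]
  [DecidableEq F] [Algebra Fq F]

/-- A nonzero polynomial vanishing everywhere forces card ≤ natDegree. -/
private lemma aux_card_le (P : F[X]) (hP : P ≠ 0) (h : ∀ x : F, P.eval x = 0) :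
    Fintype.card F ≤ P.natDegree := by
  have hsub : (Finset.univ : Finset F) ⊆ P.roots.toFinset := by
    intro x _
    simp [Multiset.mem_toFinset, mem_roots, hP, h x]
  calc Fintype.card F = (Finset.univ : Finset F).card := (Finset.card_univ).symm
    _ ≤ P.roots.toFinset.card := Finset.card_le_card hsub
    _ ≤ Multiset.card P.roots := P.roots.toFinset_card_le
    _ ≤ P.natDegree := P.card_roots'

/-- Frobenius-power is additive on sums. -/
private lemma aux_sum_pow {ι : Type} (t : Finset ι) (f : ι → F) (k : ℕ) :
    (∑ i ∈ t, f i) ^ (Fintype.card Fq) ^ k = ∑ i ∈ t, f i ^ (Fintype.card Fq) ^ k := by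
  obtain ⟨p, hpc⟩ := CharP.exists Fq
  obtain ⟨m, hp, hq⟩ := FiniteField.card Fq p
  haveI : Fact p.Prime := ⟨hp⟩
  haveI : CharP F p := charP_of_injective_algebraMap (algebraMap Fq F).injective p
  rw [hq, ← pow_mul]
  exact sum_pow_char_pow p (m * k) t f

/-- Elements of the image of `Fq` are fixed by Frobenius powers. -/
private lemma aux_fixed {w : F} (hw : w ∈ (algebraMap Fq F).range) (k : ℕ) :
    w ^ (Fintype.card Fq) ^ k = w := by
  obtain ⟨r, rfl⟩ := hw
  rw [← map_pow, FiniteField.pow_card_pow]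

/-- An element fixed by Frobenius lies in the image of `Fq`. -/
private lemma aux_mem_range {x : F} (hx : x ^ Fintype.card Fq = x) :
    x ∈ (algebraMap Fq F).range := by
  by_contra hmem
  set q := Fintype.card Fq with hqdef
  have hq : 1 < q := Fintype.one_lt_card
  set P : F[X] := X ^ q - X with hP
  have hdeg : P.natDegree = q := by
    rw [hP, natDegree_sub_eq_left_of_natDegree_lt] <;>
      simp [natDegree_X_pow, natDegree_X] <;> omega
  have hP0 : P ≠ 0 := by
    intro h; rw [h] at hdeg; simp at hdeg; omega
  set A : Finset F := Finset.univ.image (algebraMap Fq F) with hA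
  have hxA : x ∉ A := by
    intro hxa
    obtain ⟨r, _, hr⟩ := Finset.mem_image.mp hxa
    exact hmem ⟨r, hr⟩
  have hcardA : A.card = q := by
    rw [hA, Finset.card_image_of_injective _ (algebraMap Fq F).injective, Finset.card_univ]
  have hsub : insert x A ⊆ P.roots.toFinset := by
    intro a ha
    have haroot : P.eval a = 0 := by
      rcases Finset.mem_insert.mp ha with rfl | haA
      · simp [hP, hx]
      · obtain ⟨r, _, rfl⟩ := Finset.mem_image.mp haA
        simp only [hP, eval_sub, eval_pow, eval_X, ← map_pow]
        rw [hqdef, FiniteField.pow_card, sub_self]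
    simp [Multiset.mem_toFinset, mem_roots, hP0, haroot]
  have : q + 1 ≤ q := by
    calc q + 1 = (insert x A).card := by rw [Finset.card_insert_of_notMem hxA, hcardA]
      _ ≤ P.roots.toFinset.card := Finset.card_le_card hsub
      _ ≤ Multiset.card P.roots := P.roots.toFinset_card_le
      _ ≤ P.natDegree := P.card_roots'
      _ = q := hdeg
  omega

end Aux

/-- for a Galois invariant code C ⊆ F_{q^s}^n, the minimum distance of the
dual (over F_q) of the subfield subcode is at least the minimum distance of C^⊥: every
nonzero codeword of (C ∩ F_q^n)^⊥ has weight at least that of some nonzero codeword of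
C^⊥. -/
theorem stmt_13 (Fq F : Type) [Field Fq] [Fintype Fq] [Field F] [Fintype F]
    [DecidableEq F] [Algebra Fq F] (n : ℕ) (C : Submodule F (Fin n → F))
    (hGal : (fun c : Fin n → F => fun i => c i ^ Fintype.card Fq) ''
        (C : Set (Fin n → F)) = (C : Set (Fin n → F))) :
    ∀ y : Fin n → F,
      ((∀ i, y i ∈ (algebraMap Fq F).range) ∧
        ∀ c ∈ C, (∀ i, c i ∈ (algebraMap Fq F).range) → ∑ i, y i * c i = 0) →
      y ≠ 0 →
      ∃ z : Fin n → F, (∀ c ∈ C, ∑ i, z i * c i = 0) ∧ z ≠ 0 ∧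
        hammingNorm z ≤ hammingNorm y := by
  rintro y ⟨hyF, hyd⟩ hy0
  refine ⟨y, ?_, hy0, le_refl _⟩
  set q := Fintype.card Fq with hqdef
  have hq : 1 < q := Fintype.one_lt_card
  set s := Module.finrank Fq F with hs
  have hs1 : 0 < s := Module.finrank_pos
  have hcardF : Fintype.card F = q ^ s := Module.card_eq_pow_finrank
  -- Frobenius iterates preserve C
  have hfrob : ∀ c ∈ C, ∀ k : ℕ, (fun i => c i ^ q ^ k) ∈ C := by
    intro c hc k
    induction k with
    | zero => simpa using hc
    | succ k ih =>
      have hmem : (fun i => (fun i => c i ^ q ^ k) i ^ q) ∈ (C : Set (Fin n → F)) := by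
        rw [← hGal]; exact ⟨_, ih, rfl⟩
      have : (fun i => c i ^ q ^ (k + 1)) = fun i => (fun i => c i ^ q ^ k) i ^ q := by
        funext i; rw [← pow_mul, pow_succ]
      rw [this]; exact hmem
  -- the "trace-like" map
  set T : F → F := fun x => ∑ k ∈ Finset.range s, x ^ q ^ k with hT
  have hTfix : ∀ x : F, (T x) ^ q = T x := by
    intro x
    have hxs : x ^ q ^ s = x := by rw [← hcardF, FiniteField.pow_card]
    have h1 : (T x) ^ q = ∑ k ∈ Finset.range s, x ^ q ^ (k + 1) := by
      have h2 := aux_sum_pow (Fq := Fq) (Finset.range s) (fun k => x ^ q ^ k) 1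
      simp only [pow_one] at h2
      rw [hT]; rw [h2]
      exact Finset.sum_congr rfl fun k _ => by rw [← pow_mul, ← pow_succ]
    rw [h1]
    have key : (∑ k ∈ Finset.range s, x ^ q ^ (k + 1)) + x ^ q ^ 0 =
        (∑ k ∈ Finset.range s, x ^ q ^ k) + x ^ q ^ s := by
      rw [← Finset.sum_range_succ (fun k => x ^ q ^ k) s,
        Finset.sum_range_succ' (fun k => x ^ q ^ k) s]
    rw [pow_zero, pow_one, hxs] at key
    have hTx : T x = ∑ k ∈ Finset.range s, x ^ q ^ k := rfl
    rw [hTx]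
    exact add_right_cancel key
  have hTrange : ∀ x : F, T x ∈ (algebraMap Fq F).range := fun x => aux_mem_range (hTfix x)
  -- T commutes with multiplication by fixed elements, and with sums
  have hTmul : ∀ w x : F, w ∈ (algebraMap Fq F).range → T (w * x) = w * T x := by
    intro w x hw
    have hTx : ∀ z : F, T z = ∑ k ∈ Finset.range s, z ^ q ^ k := fun z => rfl
    rw [hTx, hTx, Finset.mul_sum]
    exact Finset.sum_congr rfl fun k _ => by rw [mul_pow, aux_fixed hw]
  have hTsum : ∀ {ι : Type} (t : Finset ι) (f : ι → F),
      T (∑ i ∈ t, f i) = ∑ i ∈ t, T (f i) := by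
    intro ι t f
    have hTx : T (∑ i ∈ t, f i) = ∑ k ∈ Finset.range s, (∑ i ∈ t, f i) ^ q ^ k := rfl
    rw [hTx]
    calc ∑ k ∈ Finset.range s, (∑ i ∈ t, f i) ^ q ^ k
        = ∑ k ∈ Finset.range s, ∑ i ∈ t, f i ^ q ^ k :=
          Finset.sum_congr rfl fun k _ => aux_sum_pow (Fq := Fq) t f k
      _ = ∑ i ∈ t, ∑ k ∈ Finset.range s, f i ^ q ^ k := Finset.sum_comm
      _ = ∑ i ∈ t, T (f i) := rfl
  intro c hc
  by_contra hne
  set s0 := ∑ i, y i * c i with hs0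
  -- T vanishes identically
  have hTzero : ∀ b : F, T b = 0 := by
    intro b
    set a := b * s0⁻¹ with ha
    have hac : (fun i => a * c i) ∈ C := by
      have h := C.smul_mem a hc
      have heq : (fun i => a * c i) = a • c := by
        funext i; simp [Pi.smul_apply]
      rw [heq]; exact h
    have hTc : (fun i => T (a * c i)) ∈ C := by
      have heq : (fun i => T (a * c i)) =
          ∑ k ∈ Finset.range s, (fun i => (a * c i) ^ q ^ k) := by
        funext i
        rw [Finset.sum_apply]
      rw [heq]
      exact Submodule.sum_mem C fun k _ => hfrob _ hac k
    have h0 : ∑ i, y i * T (a * c i) = 0 := hyd _ hTc fun i => hTrange _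
    have heq : ∑ i, y i * T (a * c i) = T b := by
      have h1 : ∀ i, y i * T (a * c i) = T (y i * (a * c i)) := fun i =>
        (hTmul _ _ (hyF i)).symm
      simp_rw [h1]
      rw [← hTsum]
      congr 1
      have h2 : ∑ i, y i * (a * c i) = a * s0 := by
        rw [hs0, Finset.mul_sum]
        exact Finset.sum_congr rfl fun i _ => by ring
      rw [h2, ha, mul_assoc, inv_mul_cancel₀ hne, mul_one]
    rw [← heq, h0]
  -- polynomial contradiction
  set P : F[X] := ∑ k ∈ Finset.range s, (X : F[X]) ^ q ^ k with hP
  have hPeval : ∀ x : F, P.eval x = 0 := by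
    intro x
    rw [hP]
    simp only [eval_finset_sum, eval_pow, eval_X]
    exact hTzero x
  have hP0 : P ≠ 0 := by
    have hcoe : P.coeff 1 = 1 := by
      rw [hP, finset_sum_coeff]
      simp only [coeff_X_pow]
      rw [Finset.sum_eq_single 0]
      · simp
      · intro k hk hk0
        have h1 : 1 < q ^ k := lt_of_lt_of_le hq (Nat.le_self_pow hk0 q)
        rw [if_neg (by omega)]
      · intro h0
        exact absurd (Finset.mem_range.mpr hs1) h0
    intro h
    rw [h] at hcoe
    simp at hcoe
  have hPdeg : P.natDegree ≤ q ^ (s - 1) := by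
    rw [hP]
    apply Polynomial.natDegree_sum_le_of_forall_le
    intro k hk
    rw [natDegree_X_pow]
    exact Nat.pow_le_pow_right (by omega) (by simp at hk; omega)
  have hcard := aux_card_le P hP0 hPeval
  rw [hcardF] at hcard
  have hlt : q ^ (s - 1) < q ^ s := Nat.pow_lt_pow_right hq (by omega)
  omega
end
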